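/- Sequential extension is equivalent to coKleisli composition: for all coKleisli arrows r₁ : Zipper α → β and r₂ : Zipper β → γ over the list Zipper comonad, extend r₂ ∘ extend r₁ = extend (r₁ >=> r₂); applying two rules in sequence by two extend passes yields the same global transformation as one extend pass of their coKleisli composite. -/

import Mathlib

/-- A list zipper: a focused element with left context (stored reversed,
nearest neighbor first) and right context. -/
structure Zipper (α : Type*) where
  left : List α
  focus : α
  right : List α

namespace Zipper

variable {α β γ δ : Type*}

/-- Extract the focused element. -/
def extract (z : Zipper α) : α := z.focus

/-- Move the focus one step to the left (identity if the left context is empty). -/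
def moveLeft : Zipper α → Zipper α
  | ⟨a :: l, c, r⟩ => ⟨l, a, c :: r⟩
  | z => z

/-- Move the focus one step to the right (identity if the right context is empty). -/
def moveRight : Zipper α → Zipper α
  | ⟨l, c, b :: r⟩ => ⟨c :: l, b, r⟩
  | z => z

/-- Auxiliary: successive left shifts, structurally on the left context. -/
def leftsAux : List α → α → List α → List (Zipper α)
  | [], _, _ => []
  | a :: l, c, r => ⟨l, a, c :: r⟩ :: leftsAux l a (c :: r)

/-- The list [moveLeft z, moveLeft (moveLeft z), …] of successive left shifts. -/
def lefts (z : Zipper α) : List (Zipper α) := leftsAux z.left z.focus z.right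

/-- Auxiliary: successive right shifts, structurally on the right context. -/
def rightsAux : List α → α → List α → List (Zipper α)
  | _, _, [] => []
  | l, c, b :: r => ⟨c :: l, b, r⟩ :: rightsAux (c :: l) b r

/-- The list [moveRight z, moveRight (moveRight z), …] of successive right shifts. -/
def rights (z : Zipper α) : List (Zipper α) := rightsAux z.left z.focus z.right

/-- CoKleisli extension: apply the local rule `f` at every position. -/
def extend (f : Zipper α → β) (z : Zipper α) : Zipper β :=
  ⟨(lefts z).map f, f z, (rights z).map f⟩

/-- The underlying list of a zipper. -/
def toList (z : Zipper α) : List α := z.left.reverse ++ [z.focus] ++ z.right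

/-- The zipper refocused at position `i` (intended for `i < (toList z).length`). -/
def focusAt (z : Zipper α) (i : ℕ) : Zipper α :=
  ⟨((toList z).take i).reverse, (toList z).getD i z.focus, (toList z).drop (i + 1)⟩

end Zipper

/-- CoKleisli composition over the list Zipper comonad. -/
def cokComp {α β γ : Type*} (f : Zipper α → β) (g : Zipper β → γ) : Zipper α → γ :=
  fun z => g (Zipper.extend f z)

namespace Zipper

private theorem leftsAux_extend {α β : Type*} (f : Zipper α → β) :
    ∀ (l : List α) (c : α) (r : List α),
      leftsAux ((leftsAux l c r).map f) (f ⟨l, c, r⟩) ((rightsAux l c r).map f)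
        = (leftsAux l c r).map (extend f)
  | [], _, _ => rfl
  | a :: l, c, r => by
    simp only [leftsAux, List.map_cons, List.cons.injEq]
    constructor
    · rfl
    · have : rightsAux l a (c :: r) = ⟨a :: l, c, r⟩ :: rightsAux (a :: l) c r := rfl
      rw [← List.map_cons (f := f) (a := ⟨a :: l, c, r⟩) (l := rightsAux (a :: l) c r), ← this]
      exact leftsAux_extend f l a (c :: r)

private theorem rightsAux_extend {α β : Type*} (f : Zipper α → β) :
    ∀ (r : List α) (c : α) (l : List α),
      rightsAux ((leftsAux l c r).map f) (f ⟨l, c, r⟩) ((rightsAux l c r).map f)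
        = (rightsAux l c r).map (extend f)
  | [], _, _ => rfl
  | b :: r, c, l => by
    simp only [rightsAux, List.map_cons, List.cons.injEq]
    constructor
    · rfl
    · have : leftsAux (c :: l) b r = ⟨l, c, b :: r⟩ :: leftsAux l c (b :: r) := rfl
      rw [← List.map_cons (f := f) (a := ⟨l, c, b :: r⟩) (l := leftsAux l c (b :: r)), ← this]
      exact rightsAux_extend f r b (c :: l)

theorem lefts_extend {α β : Type*} (f : Zipper α → β) (z : Zipper α) :
    lefts (extend f z) = (lefts z).map (extend f) := by
  cases z with
  | mk l c r => exact leftsAux_extend f l c r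

theorem rights_extend {α β : Type*} (f : Zipper α → β) (z : Zipper α) :
    rights (extend f z) = (rights z).map (extend f) := by
  cases z with
  | mk l c r => exact rightsAux_extend f r c l

end Zipper

/-- Sequential extension equals one extend pass of the coKleisli composite. -/
theorem extend_comp_extend_eq_extend_cokComp {α β γ : Type*}
    (r₁ : Zipper α → β) (r₂ : Zipper β → γ) :
    Zipper.extend r₂ ∘ Zipper.extend r₁ = Zipper.extend (cokComp r₁ r₂) := by
  funext z
  show Zipper.extend r₂ (Zipper.extend r₁ z) = _
  rw [show Zipper.extend r₂ (Zipper.extend r₁ z) =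
        ⟨((Zipper.extend r₁ z).lefts).map r₂, r₂ (Zipper.extend r₁ z),
          ((Zipper.extend r₁ z).rights).map r₂⟩ from rfl,
      Zipper.lefts_extend, Zipper.rights_extend, List.map_map, List.map_map]
  rfl
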